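/- The Calabi–Yau condition is preserved under Berglund–Hübsch transposition: if the sum of all entries of A^{-1} equals 1 and H is a subgroup with J_A ⊆ H ⊆ SL_A, then the sum of all entries of (Aᵀ)^{-1} equals 1 and J_{Aᵀ} ⊆ H^T ⊆ SL_{Aᵀ}. -/

import Mathlib

open scoped BigOperators
open Matrix

noncomputable section

abbrev QZ : Type := AddCircle (1 : ℚ)

def qz : ℚ →+ QZ := QuotientAddGroup.mk' _

def GA {n : ℕ} (A : Matrix (Fin n) (Fin n) ℤ) : AddSubgroup (Fin n → QZ) where
  carrier := {g | ∀ i, ∑ j, A i j • g j = 0}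
  zero_mem' := by intro i; simp
  add_mem' := by
    intro a b ha hb i
    simp only [Pi.add_apply, smul_add, Finset.sum_add_distrib, ha i, hb i, add_zero]
  neg_mem' := by
    intro a ha i
    simp only [Pi.neg_apply, smul_neg, Finset.sum_neg_distrib, ha i, neg_zero]

def SLA {n : ℕ} (A : Matrix (Fin n) (Fin n) ℤ) : AddSubgroup (Fin n → QZ) where
  carrier := {g | g ∈ GA A ∧ ∑ i, g i = 0}
  zero_mem' := ⟨(GA A).zero_mem, by simp⟩
  add_mem' := by
    intro a b ha hb
    exact ⟨(GA A).add_mem ha.1 hb.1, by simp [Pi.add_apply, Finset.sum_add_distrib, ha.2, hb.2]⟩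
  neg_mem' := by
    intro a ha
    exact ⟨(GA A).neg_mem ha.1, by simp [Pi.neg_apply, Finset.sum_neg_distrib, ha.2]⟩

def jA {n : ℕ} (A : Matrix (Fin n) (Fin n) ℤ) : Fin n → QZ :=
  fun i => qz (((A.map (Int.cast : ℤ → ℚ))⁻¹).mulVec 1 i)

/-- `v : ℚ^n` is a lift of `g : (ℚ/ℤ)^n`. -/
def IsLift {n : ℕ} (v : Fin n → ℚ) (g : Fin n → QZ) : Prop := ∀ i, qz (v i) = g i

lemma qz_eq_zero_iff (q : ℚ) : qz q = 0 ↔ ∃ m : ℤ, (m : ℚ) = q := by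
  constructor
  · intro h
    have : q ∈ AddSubgroup.zmultiples (1 : ℚ) := by
      rwa [qz, QuotientAddGroup.mk'_apply, QuotientAddGroup.eq_zero_iff] at h
    obtain ⟨k, hk⟩ := this
    exact ⟨k, by simpa using hk⟩
  · rintro ⟨m, rfl⟩
    rw [qz, QuotientAddGroup.mk'_apply, QuotientAddGroup.eq_zero_iff]
    exact ⟨m, by simp⟩

lemma exists_lift {n : ℕ} (g : Fin n → QZ) : ∃ v : Fin n → ℚ, IsLift v g := by
  choose v hv using fun i => QuotientAddGroup.mk'_surjective _ (g i)
  exact ⟨v, hv⟩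

lemma row_int {n : ℕ} {A : Matrix (Fin n) (Fin n) ℤ} {h : Fin n → QZ} (hh : h ∈ GA A)
    {vh : Fin n → ℚ} (hl : IsLift vh h) (i : Fin n) :
    ∃ m : ℤ, (m : ℚ) = ∑ j, (A i j : ℚ) * vh j := by
  have h0 : qz (∑ j, (A i j : ℚ) * vh j) = 0 := by
    have := hh i
    calc qz (∑ j, (A i j : ℚ) * vh j) = ∑ j, A i j • qz (vh j) := by
          rw [map_sum]
          refine Finset.sum_congr rfl fun j _ => ?_
          rw [← map_zsmul qz, zsmul_eq_mul]
      _ = ∑ j, A i j • h j := by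
          refine Finset.sum_congr rfl fun j _ => by rw [hl j]
      _ = 0 := hh i
  exact (qz_eq_zero_iff _).1 h0

/-- The Berglund–Hübsch dual `H^T` of a subgroup `H ≤ G_A`: all `g ∈ G_{Aᵀ}` such that
for every `h ∈ H` and all lifts `ĝ, ĥ ∈ ℚ^n` of `g, h`, the number `∑ᵢⱼ ĝᵢ Aᵢⱼ ĥⱼ` is an
integer. -/
def dual {n : ℕ} (A : Matrix (Fin n) (Fin n) ℤ) (H : AddSubgroup (Fin n → QZ))
    (hH : H ≤ GA A) : AddSubgroup (Fin n → QZ) where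
  carrier := {g | g ∈ GA Aᵀ ∧ ∀ h ∈ H, ∀ vg vh : Fin n → ℚ, IsLift vg g → IsLift vh h →
    ∃ m : ℤ, (m : ℚ) = ∑ i, ∑ j, vg i * (A i j : ℚ) * vh j}
  zero_mem' := by
    refine ⟨(GA Aᵀ).zero_mem, ?_⟩
    intro h hh vg vh lg lh
    have hg : ∀ i, ∃ m : ℤ, (m : ℚ) = vg i := by
      intro i
      exact (qz_eq_zero_iff _).1 ((lg i).trans rfl)
    choose mg hmg using hg
    choose c hc using fun i => row_int (hH hh) lh i
    refine ⟨∑ i, mg i * c i, ?_⟩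
    push_cast
    calc (∑ i, (mg i : ℚ) * (c i : ℚ))
        = ∑ i, vg i * ∑ j, (A i j : ℚ) * vh j := by
          refine Finset.sum_congr rfl fun i _ => by rw [hmg i, hc i]
      _ = ∑ i, ∑ j, vg i * (A i j : ℚ) * vh j := by
          refine Finset.sum_congr rfl fun i _ => ?_
          rw [Finset.mul_sum]
          exact Finset.sum_congr rfl fun j _ => (mul_assoc _ _ _).symm
  add_mem' := by
    intro a b ha hb
    refine ⟨(GA Aᵀ).add_mem ha.1 hb.1, ?_⟩
    intro h hh vg vh lg lh
    obtain ⟨va, hva⟩ := exists_lift a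
    have hvb : IsLift (vg - va) b := by
      intro i
      have : qz (vg i - va i) = qz (vg i) - qz (va i) := map_sub qz _ _
      rw [Pi.sub_apply, this, lg i, hva i, Pi.add_apply, add_sub_cancel_left]
    obtain ⟨m₁, e₁⟩ := ha.2 h hh va vh hva lh
    obtain ⟨m₂, e₂⟩ := hb.2 h hh (vg - va) vh hvb lh
    refine ⟨m₁ + m₂, ?_⟩
    push_cast
    rw [e₁, e₂, ← Finset.sum_add_distrib]
    refine Finset.sum_congr rfl fun i _ => ?_
    rw [← Finset.sum_add_distrib]
    refine Finset.sum_congr rfl fun j _ => ?_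
    simp only [Pi.sub_apply]
    ring
  neg_mem' := by
    intro a ha
    refine ⟨(GA Aᵀ).neg_mem ha.1, ?_⟩
    intro h hh vg vh lg lh
    have hvg : IsLift (-vg) a := by
      intro i
      have : qz (-(vg i)) = - qz (vg i) := map_neg qz _
      rw [Pi.neg_apply, this, lg i, Pi.neg_apply, neg_neg]
    obtain ⟨m, e⟩ := ha.2 h hh (-vg) vh hvg lh
    refine ⟨-m, ?_⟩
    push_cast
    rw [e, ← Finset.sum_neg_distrib]
    refine Finset.sum_congr rfl fun i _ => ?_
    rw [← Finset.sum_neg_distrib]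
    refine Finset.sum_congr rfl fun j _ => ?_
    simp only [Pi.neg_apply]
    ring

lemma dual_le {n : ℕ} (A : Matrix (Fin n) (Fin n) ℤ) (H : AddSubgroup (Fin n → QZ))
    (hH : H ≤ GA A) : dual A H hH ≤ GA Aᵀ := fun _ hg => hg.1

lemma SLA_le {n : ℕ} (A : Matrix (Fin n) (Fin n) ℤ) : SLA A ≤ GA A := fun _ hg => hg.1


lemma qz_intCast (m : ℤ) : qz (m : ℚ) = 0 := (qz_eq_zero_iff _).2 ⟨m, rfl⟩

lemma qz_sum_mul {n : ℕ} (a : Fin n → ℤ) (v : Fin n → ℚ) :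
    ∑ j, a j • qz (v j) = qz (∑ j, (a j : ℚ) * v j) := by
  rw [map_sum]
  refine Finset.sum_congr rfl fun j _ => ?_
  rw [← map_zsmul qz, zsmul_eq_mul]

lemma isUnit_det_map {n : ℕ} {A : Matrix (Fin n) (Fin n) ℤ} (hA : A.det ≠ 0) :
    IsUnit (A.map (Int.cast : ℤ → ℚ)).det := by
  rw [isUnit_iff_ne_zero]
  have : (A.map (Int.cast : ℤ → ℚ)).det = ((A.det : ℤ) : ℚ) := by
    rw [show A.map (Int.cast : ℤ → ℚ) = (Int.castRingHom ℚ).mapMatrix A from rfl,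
      ← RingHom.map_det]
    rfl
  rw [this]
  exact_mod_cast hA

lemma lift_diff {a b : ℚ} (h : qz a = qz b) : ∃ k : ℤ, a = b + k := by
  obtain ⟨k, hk⟩ := (qz_eq_zero_iff (a - b)).1 (by rw [map_sub, h, sub_self])
  exact ⟨k, by linarith⟩

lemma mulVec_inv_row {n : ℕ} {M : Matrix (Fin n) (Fin n) ℚ} (hu : IsUnit M.det) (i : Fin n) :
    ∑ j, M i j * (M⁻¹.mulVec 1) j = 1 := by
  have h1 : M.mulVec (M⁻¹.mulVec 1) = 1 := by
    rw [Matrix.mulVec_mulVec, Matrix.mul_nonsing_inv _ hu, Matrix.one_mulVec]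
  simpa [Matrix.mulVec, dotProduct] using congrFun h1 i

/-- the Calabi–Yau condition is preserved under Berglund–Hübsch transposition:
if the sum of all entries of `A⁻¹` is `1` and `J_A ⊆ H ⊆ SL_A`, then the sum of all entries
of `(Aᵀ)⁻¹` is `1` and `J_{Aᵀ} ⊆ H^T ⊆ SL_{Aᵀ}`. -/
theorem CalabiYau_transpose {n : ℕ} (hn : 1 ≤ n) (A : Matrix (Fin n) (Fin n) ℤ)
    (hA : A.det ≠ 0)
    (hsum : ∑ i, ∑ j, ((A.map (Int.cast : ℤ → ℚ))⁻¹) i j = 1)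
    (H : AddSubgroup (Fin n → QZ))
    (hJH : AddSubgroup.zmultiples (jA A) ≤ H) (hHSL : H ≤ SLA A) :
    (∑ i, ∑ j, ((Aᵀ.map (Int.cast : ℤ → ℚ))⁻¹) i j = 1) ∧
    AddSubgroup.zmultiples (jA Aᵀ) ≤ dual A H (hHSL.trans (SLA_le A)) ∧
    dual A H (hHSL.trans (SLA_le A)) ≤ SLA Aᵀ := by
  have huA : IsUnit (A.map (Int.cast : ℤ → ℚ)).det := isUnit_det_map hA
  have huAt : IsUnit (Aᵀ.map (Int.cast : ℤ → ℚ)).det :=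
    isUnit_det_map (by rwa [Matrix.det_transpose])
  -- the canonical lift of jA Aᵀ
  set w : Fin n → ℚ := ((Aᵀ.map (Int.cast : ℤ → ℚ))⁻¹).mulVec 1 with hwdef
  have hlw : IsLift w (jA Aᵀ) := fun i => rfl
  have hAtw : ∀ i, ∑ j, ((Aᵀ i j : ℤ) : ℚ) * w j = 1 := by
    intro i
    simpa [Matrix.map_apply] using mulVec_inv_row huAt i
  have hw : ∀ j, ∑ i, ((A i j : ℤ) : ℚ) * w i = 1 := fun j => hAtw j
  have hinvT : (Aᵀ.map (Int.cast : ℤ → ℚ))⁻¹ = ((A.map (Int.cast : ℤ → ℚ))⁻¹)ᵀ := by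
    rw [Matrix.transpose_map, ← Matrix.transpose_nonsing_inv]
  refine ⟨?_, ?_, ?_⟩
  · -- sum of entries of (Aᵀ)⁻¹ is 1
    rw [hinvT]
    simp only [Matrix.transpose_apply]
    rw [Finset.sum_comm]
    simpa [Matrix.transpose_apply] using hsum
  · -- J_{Aᵀ} ≤ H^T
    have hjmem : jA Aᵀ ∈ dual A H (hHSL.trans (SLA_le A)) := by
      refine ⟨?_, ?_⟩
      · -- jA Aᵀ ∈ GA Aᵀ
        intro i
        calc ∑ j, Aᵀ i j • jA Aᵀ j = ∑ j, Aᵀ i j • qz (w j) :=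
              Finset.sum_congr rfl fun j _ => by rw [hlw j]
          _ = qz (∑ j, ((Aᵀ i j : ℤ) : ℚ) * w j) := qz_sum_mul _ _
          _ = 0 := by rw [hAtw i]; exact_mod_cast qz_intCast 1
      · intro h hh vg vh lg lh
        have hk : ∀ i, ∃ k : ℤ, vg i = w i + k := fun i =>
          lift_diff ((lg i).trans (hlw i).symm)
        choose k hkk using hk
        choose cc hcc using fun i => row_int (hHSL hh).1 lh i
        have hs : ∃ s : ℤ, (s : ℚ) = ∑ j, vh j := by
          apply (qz_eq_zero_iff _).1
          rw [map_sum]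
          calc ∑ j, qz (vh j) = ∑ j, h j := Finset.sum_congr rfl fun j _ => lh j
            _ = 0 := (hHSL hh).2
        obtain ⟨s, hs⟩ := hs
        have main : ∑ i, ∑ j, vg i * (A i j : ℚ) * vh j
            = (∑ j, vh j) + ∑ i, (k i : ℚ) * (cc i : ℚ) := by
          calc ∑ i, ∑ j, vg i * (A i j : ℚ) * vh j
              = ∑ i, ∑ j, (w i * (A i j : ℚ) * vh j + (k i : ℚ) * ((A i j : ℚ) * vh j)) :=
                Finset.sum_congr rfl fun i _ => Finset.sum_congr rfl fun j _ => by
                  rw [hkk i]; ring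
            _ = (∑ i, ∑ j, w i * (A i j : ℚ) * vh j)
                + ∑ i, ∑ j, (k i : ℚ) * ((A i j : ℚ) * vh j) := by
                  simp [Finset.sum_add_distrib]
            _ = (∑ j, vh j) + ∑ i, (k i : ℚ) * (cc i : ℚ) := by
                  congr 1
                  · rw [Finset.sum_comm]
                    refine Finset.sum_congr rfl fun j _ => ?_
                    rw [show ∑ i, w i * (A i j : ℚ) * vh j
                        = (∑ i, ((A i j : ℤ) : ℚ) * w i) * vh j from by
                      rw [Finset.sum_mul]
                      exact Finset.sum_congr rfl fun i _ => by ring]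
                    rw [hw j, one_mul]
                  · refine Finset.sum_congr rfl fun i _ => ?_
                    rw [← Finset.mul_sum, hcc i]
        exact ⟨s + ∑ i, k i * cc i, by rw [main, ← hs]; push_cast; ring⟩
    exact AddSubgroup.zmultiples_le.2 hjmem
  · -- H^T ≤ SL_{Aᵀ}
    intro g hg
    refine ⟨hg.1, ?_⟩
    obtain ⟨vg, lg⟩ := exists_lift g
    have hjH : jA A ∈ H := hJH (AddSubgroup.mem_zmultiples _)
    have hlu : IsLift (((A.map (Int.cast : ℤ → ℚ))⁻¹).mulVec 1) (jA A) := fun i => rfl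
    obtain ⟨m, hm⟩ := hg.2 (jA A) hjH vg _ lg hlu
    have hAu : ∀ i, ∑ j, ((A i j : ℤ) : ℚ) * ((A.map (Int.cast : ℤ → ℚ))⁻¹).mulVec 1 j = 1 := by
      intro i
      simpa [Matrix.map_apply] using mulVec_inv_row huA i
    have hmv : (m : ℚ) = ∑ i, vg i := by
      rw [hm]
      refine Finset.sum_congr rfl fun i _ => ?_
      rw [show ∑ j, vg i * (A i j : ℚ) * ((A.map (Int.cast : ℤ → ℚ))⁻¹).mulVec 1 j
          = vg i * ∑ j, ((A i j : ℤ) : ℚ) * ((A.map (Int.cast : ℤ → ℚ))⁻¹).mulVec 1 j from by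
        rw [Finset.mul_sum]
        exact Finset.sum_congr rfl fun j _ => by ring]
      rw [hAu i, mul_one]
    calc ∑ i, g i = ∑ i, qz (vg i) := Finset.sum_congr rfl fun i _ => (lg i).symm
      _ = qz (∑ i, vg i) := (map_sum qz _ _).symm
      _ = qz ((m : ℤ) : ℚ) := by rw [← hmv]
      _ = 0 := qz_intCast m

end
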